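/- Let H ∈ ℝ^{d×d} be a symmetric matrix, let x ∈ ℝ^d, and let x⁺ = x − H∇f(x). Setting Ĥ = H_*^{1/2} H H_*^{1/2}, σ = (M/μ^{3/2})‖H_*^{1/2}(x − x_*)‖ and σ⁺ = (M/μ^{3/2})‖H_*^{1/2}(x⁺ − x_*)‖, one has σ⁺ ≤ (‖Ĥ‖·σ + ‖I − Ĥ‖)·σ. -/

import Mathlib

noncomputable section

open Matrix Finset

abbrev E (d : ℕ) := EuclideanSpace ℝ (Fin d)
abbrev Mat (d : ℕ) := Matrix (Fin d) (Fin d) ℝ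

/-- Spectral (operator 2-) norm of a real matrix. -/
def spec {d : ℕ} (A : Mat d) : ℝ := ‖Matrix.toEuclideanCLM (𝕜 := ℝ) A‖

/-- Frobenius norm of a real matrix. -/
def frob {d : ℕ} (A : Mat d) : ℝ := Real.sqrt (∑ i, ∑ j, (A i j) ^ 2)

/-- A matrix acting on a Euclidean vector. -/
def mApp {d : ℕ} (A : Mat d) (v : E d) : E d := Matrix.toEuclideanCLM (𝕜 := ℝ) A v

/-- Outer product `u vᵀ`. -/
def outer {d : ℕ} (u v : E d) : Mat d := Matrix.of fun i j => u i * v j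

/-- Euclidean dot product. -/
def dot {d : ℕ} (u v : E d) : ℝ := ∑ i, u i * v i

/-- `σ(x) = (M/μ^{3/2})·‖H_*^{1/2}(x − x_*)‖`. -/
def sig {d : ℕ} (M μ : ℝ) (sqH : Mat d) (xs x : E d) : ℝ :=
  M / μ ^ ((3:ℝ)/2) * ‖mApp sqH (x - xs)‖

lemma dot_eq_inner {d : ℕ} (u v : E d) : dot u v = inner (𝕜 := ℝ) u v := by
  simp [dot, PiLp.inner_apply, RCLike.inner_apply, starRingEnd_apply]
  exact Finset.sum_congr rfl fun i _ => mul_comm _ _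

lemma isSelfAdjoint_clm {d : ℕ} (A : Mat d) (hA : A.IsHermitian) :
    _root_.IsSelfAdjoint (Matrix.toEuclideanCLM (𝕜 := ℝ) A) := by
  rw [_root_.IsSelfAdjoint, ← map_star, Matrix.star_eq_conjTranspose, hA.eq]

lemma key_arith (μ M a b W Hn U P : ℝ) (hμ : 0 < μ) (hM : 0 < M)
    (ha : 0 ≤ a) (hb : 0 ≤ b) (hW : 0 ≤ W) (hHn : 0 ≤ Hn) (hU : 0 ≤ U)
    (h1 : Real.sqrt μ * U ≤ M * Hn * Hn) (h2 : Real.sqrt μ * Hn ≤ W)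
    (h3 : P ≤ b * W + a * U) :
    M / μ ^ ((3:ℝ)/2) * P ≤
      (a * (M / μ ^ ((3:ℝ)/2) * W) + b) * (M / μ ^ ((3:ℝ)/2) * W) := by
  have hp : (0:ℝ) < μ ^ ((3:ℝ)/2) := Real.rpow_pos_of_pos hμ _
  have hpval : μ ^ ((3:ℝ)/2) = μ * Real.sqrt μ := by
    rw [show ((3:ℝ)/2) = 1 + 1/2 by norm_num, Real.rpow_add hμ, Real.rpow_one,
      Real.sqrt_eq_rpow]
  set p : ℝ := μ ^ ((3:ℝ)/2) with hpdef
  have hμs : Real.sqrt μ * Real.sqrt μ = μ := Real.mul_self_sqrt hμ.le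
  have hW2 : μ * (Hn * Hn) ≤ W ^ 2 := by nlinarith [mul_le_mul h2 h2 (mul_nonneg (Real.sqrt_nonneg μ) hHn) hW]
  have hU2 : U ≤ M / p * W ^ 2 := by
    rw [div_mul_eq_mul_div, le_div_iff₀ hp]
    calc U * p = μ * (Real.sqrt μ * U) := by rw [hpval]; ring
      _ ≤ μ * (M * Hn * Hn) := mul_le_mul_of_nonneg_left h1 hμ.le
      _ = M * (μ * (Hn * Hn)) := by ring
      _ ≤ M * W ^ 2 := mul_le_mul_of_nonneg_left hW2 hM.le
  have hMp : 0 ≤ M / p := div_nonneg hM.le hp.le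
  have hfin : P ≤ b * W + a * (M / p * W ^ 2) :=
    h3.trans (add_le_add le_rfl (mul_le_mul_of_nonneg_left hU2 ha))
  calc M / p * P ≤ M / p * (b * W + a * (M / p * W ^ 2)) :=
        mul_le_mul_of_nonneg_left hfin hMp
    _ = (a * (M / p * W) + b) * (M / p * W) := by ring

theorem newton_like_step_contraction_H
    {d : ℕ}
    (f : E d → ℝ) (g : E d → E d) (Hess : E d → Mat d) (xs : E d)
    (μ L M : ℝ) (hμ : 0 < μ) (hμL : μ ≤ L) (hM : 0 < M)
    -- `g` is the gradient of `f`, and `Hess` its Hessian (so `f` is twice differentiable)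
    (hg : ∀ x, HasGradientAt f (g x) x)
    (hHd : ∀ x, HasFDerivAt g (Matrix.toEuclideanCLM (𝕜 := ℝ) (Hess x)) x)
    -- `xs` is the unique minimizer of `f`
    (hmin : ∀ x, f xs ≤ f x)
    (huniq : ∀ x, (∀ y, f x ≤ f y) → x = xs)
    -- Assumption 1: strong convexity and gradient Lipschitz continuity
    (hgl : ∀ x y, μ * ‖x - y‖ ≤ ‖g x - g y‖)
    (hgu : ∀ x y, ‖g x - g y‖ ≤ L * ‖x - y‖)
    (hHl : ∀ x v, μ * ‖v‖ ^ 2 ≤ dot v (mApp (Hess x) v))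
    (hHu : ∀ x v, dot v (mApp (Hess x) v) ≤ L * ‖v‖ ^ 2)
    -- Assumption 2: Hessian Lipschitz continuity toward the optimum
    (hLip : ∀ x, spec (Hess x - Hess xs) ≤ M * ‖x - xs‖)
    -- `sqH` is the positive definite square root `H_*^{1/2}` of `H_* = ∇²f(x_*)`
    (sqH : Mat d) (hsqH : sqH.PosDef) (hsqH2 : sqH * sqH = Hess xs)
    (Hm : Mat d) (hHm : Hm.IsSymm)
    (x : E d) :
    sig M μ sqH xs (x - mApp Hm (g x)) ≤
      (spec (sqH * Hm * sqH) * sig M μ sqH xs x + spec (1 - sqH * Hm * sqH)) *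
        sig M μ sqH xs x := by
  classical
  set T : E d →L[ℝ] E d := Matrix.toEuclideanCLM (𝕜 := ℝ) sqH with hT
  set B : E d →L[ℝ] E d := Matrix.toEuclideanCLM (𝕜 := ℝ) Hm with hB
  have hTsa : _root_.IsSelfAdjoint T := isSelfAdjoint_clm sqH hsqH.1
  have hsμ : (0:ℝ) < Real.sqrt μ := Real.sqrt_pos.mpr hμ
  -- lower bound ‖T v‖ ≥ √μ ‖v‖
  have hTlow : ∀ v : E d, Real.sqrt μ * ‖v‖ ≤ ‖T v‖ := by
    intro v
    have h1 : μ * ‖v‖ ^ 2 ≤ dot v (mApp (Hess xs) v) := hHl xs v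
    have h2 : mApp (Hess xs) v = T (T v) := by
      rw [mApp, ← hsqH2, _root_.map_mul]; rfl
    have h3 : dot v (mApp (Hess xs) v) = ‖T v‖ ^ 2 := by
      rw [h2, dot_eq_inner]
      have : inner (𝕜 := ℝ) v (T (T v)) = inner (𝕜 := ℝ) (T v) (T v) := by
        rw [← ContinuousLinearMap.adjoint_inner_left, hTsa.adjoint_eq]
      rw [this, real_inner_self_eq_norm_sq]
    have h4 : μ * ‖v‖ ^ 2 ≤ ‖T v‖ ^ 2 := h1.trans_eq h3
    nlinarith [norm_nonneg v, norm_nonneg (T v), Real.sq_sqrt hμ.le, Real.sqrt_nonneg μ]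
  -- T is surjective
  have hTsurj : Function.Surjective T := by
    have hinj : Function.Injective T := by
      intro a b hab
      have hz0 : T (a - b) = 0 := by rw [map_sub, hab, sub_self]
      have hl := hTlow (a - b)
      rw [hz0, norm_zero] at hl
      have hz : ‖a - b‖ ≤ 0 := by nlinarith [norm_nonneg (a-b)]
      exact sub_eq_zero.mp (norm_le_zero_iff.mp hz)
    exact LinearMap.surjective_of_injective (f := (T : E d →ₗ[ℝ] E d)) hinj
  -- gradient vanishes at the minimizer
  have hg0 : g xs = 0 := by
    have hloc : IsLocalMin f xs := Filter.Eventually.of_forall hmin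
    have h0 := hloc.hasFDerivAt_eq_zero (hg xs).hasFDerivAt
    have := congrArg (InnerProductSpace.toDual ℝ (E d)).symm h0
    simpa using this
  -- Taylor / mean value bound
  set h : E d := x - xs with hh
  have hTaylor : ‖g x - T (T h)‖ ≤ M * ‖h‖ * ‖h‖ := by
    set T0 := Matrix.toEuclideanCLM (𝕜 := ℝ) (Hess xs) with hT0
    have hTT : ∀ v : E d, T0 v = T (T v) := by
      intro v; rw [hT0, ← hsqH2, _root_.map_mul]; rfl
    set s : Set (E d) := Metric.closedBall xs ‖x - xs‖ with hs
    have key := Convex.norm_image_sub_le_of_norm_hasFDerivWithin_le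
      (f := fun y => g y - T0 y)
      (f' := fun y => Matrix.toEuclideanCLM (𝕜 := ℝ) (Hess y) - T0)
      (C := M * ‖x - xs‖) (s := s) (x := xs) (y := x)
      (fun y _ => ((hHd y).sub (T0.hasFDerivAt)).hasFDerivWithinAt)
      (fun y hy => by
        have heq : Matrix.toEuclideanCLM (𝕜 := ℝ) (Hess y) - T0
            = Matrix.toEuclideanCLM (𝕜 := ℝ) (Hess y - Hess xs) := by simp [hT0]
        show ‖Matrix.toEuclideanCLM (𝕜 := ℝ) (Hess y) - T0‖ ≤ _
        rw [heq]
        refine (hLip y).trans ?_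
        have hd := Metric.mem_closedBall.mp hy
        rw [dist_eq_norm] at hd
        nlinarith)
      (convex_closedBall _ _)
      (Metric.mem_closedBall_self (norm_nonneg _))
      (by simp [hs, Metric.mem_closedBall, dist_eq_norm])
    calc ‖g x - T (T h)‖ = ‖(g x - T0 x) - (g xs - T0 xs)‖ := by
          rw [hg0]
          congr 1
          rw [← hTT h, hh, map_sub]
          abel
      _ ≤ M * ‖x - xs‖ * ‖x - xs‖ := key
  -- decomposition
  set r : E d := g x - T (T h) with hr
  obtain ⟨u, hu⟩ := hTsurj r
  have hunorm : Real.sqrt μ * ‖u‖ ≤ ‖r‖ := by rw [← hu]; exact hTlow u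
  set Ahat : E d →L[ℝ] E d := Matrix.toEuclideanCLM (𝕜 := ℝ) (sqH * Hm * sqH) with hAhat
  have hAhatTBT : ∀ v : E d, Ahat v = T (B (T v)) := by
    intro v
    rw [hAhat, _root_.map_mul, _root_.map_mul]
    rfl
  have hdecomp : T ((x - mApp Hm (g x)) - xs) = (T h - Ahat (T h)) - Ahat u := by
    have hgx : g x = T (T h) + r := by rw [hr]; abel
    have : (x - mApp Hm (g x)) - xs = h - B (T (T h)) - B (T u) := by
      rw [hh, mApp, hgx, ← hB, map_add, hu]
      abel
    rw [this, map_sub, map_sub, hAhatTBT, hAhatTBT]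
  -- norm bound on the new point
  have hnormbound : ‖T ((x - mApp Hm (g x)) - xs)‖ ≤
      ‖1 - Ahat‖ * ‖T h‖ + ‖Ahat‖ * ‖u‖ := by
    rw [hdecomp]
    refine (norm_sub_le _ _).trans (add_le_add ?_ (Ahat.le_opNorm u))
    have : T h - Ahat (T h) = (1 - Ahat) (T h) := by
      simp [ContinuousLinearMap.sub_apply]
    rw [this]
    exact (1 - Ahat).le_opNorm (T h)
  -- identify spec values
  have hspec1 : spec (sqH * Hm * sqH) = ‖Ahat‖ := rfl
  have hspec2 : spec (1 - sqH * Hm * sqH) = ‖1 - Ahat‖ := by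
    rw [spec, map_sub, _root_.map_one]
  -- conclude
  have hgoal1 : sig M μ sqH xs (x - mApp Hm (g x)) =
      M / μ ^ ((3:ℝ)/2) * ‖T ((x - mApp Hm (g x)) - xs)‖ := by
    rw [sig, mApp, ← hT]
  have hgoal2 : sig M μ sqH xs x = M / μ ^ ((3:ℝ)/2) * ‖T h‖ := by
    rw [sig, mApp, ← hT, ← hh]
  rw [hgoal1, hgoal2, hspec1, hspec2]
  exact key_arith μ M ‖Ahat‖ ‖1 - Ahat‖ (‖T h‖) (‖h‖) (‖u‖)
    (‖T ((x - mApp Hm (g x)) - xs)‖) hμ hM (norm_nonneg _) (norm_nonneg _)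
    (norm_nonneg _) (norm_nonneg _) (norm_nonneg _)
    (hunorm.trans hTaylor) (hTlow h) hnormbound
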